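/- Suppose Q₁,…,Q_N ∈ S₊ⁿ all belong to C*[k−1] = {Q : ∃ β₁,…,β_N ∈ [0,1], Σ βₗ ≤ 1, 0 ⪯ Q ⪯ Σₗ βₗ Pₗ[k−1]⁻¹}, and suppose the inputs satisfy Pₗ[k−1]⁻¹ ⪯ θ̄·Pₗ[k]⁻¹ for all ℓ and some θ̄ ≥ 1. Then for any index i, any subset 𝒩ᵢ of indices containing i, and any coefficients λ_P, (λⱼ)_{j∈𝒩ᵢ} in [0,1] with λ_P + Σ_{j∈𝒩ᵢ} λⱼ ≤ 1, every Q with 0 ⪯ Q ⪯ λ_P Pᵢ[k]⁻¹ + (1/θ̄) Σ_{j∈𝒩ᵢ} λⱼ Qⱼ belongs to C*[k] = {Q : ∃ λ₁,…,λ_N ∈ [0,1], Σ λₗ ≤ 1, 0 ⪯ Q ⪯ Σₗ λₗ Pₗ[k]⁻¹}. -/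

import Mathlib

lemma psd_add {n : ℕ} {A B : Matrix (Fin n) (Fin n) ℝ}
    (hA : A.PosSemidef) (hB : B.PosSemidef) : (A + B).PosSemidef := by
  refine ⟨hA.1.add hB.1, fun x => ?_⟩
  have := add_nonneg (hA.2 x) (hB.2 x)
  simpa [Matrix.add_mulVec, dotProduct_add, mul_add, add_mul, Finsupp.sum_add] using this

lemma psd_smul {n : ℕ} {A : Matrix (Fin n) (Fin n) ℝ} {c : ℝ}
    (hA : A.PosSemidef) (hc : 0 ≤ c) : (c • A).PosSemidef := by
  refine ⟨?_, fun x => ?_⟩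
  · unfold Matrix.IsHermitian
    rw [Matrix.conjTranspose_smul, hA.1]
    simp
  · have := mul_nonneg hc (hA.2 x)
    simpa [Matrix.smul_mulVec, dotProduct_smul, smul_eq_mul, Finsupp.mul_sum, mul_assoc, mul_left_comm] using this

lemma psd_sum {n : ℕ} {ι : Type*} (s : Finset ι) (f : ι → Matrix (Fin n) (Fin n) ℝ)
    (h : ∀ j ∈ s, (f j).PosSemidef) : (∑ j ∈ s, f j).PosSemidef := by
  classical
  induction s using Finset.induction_on with
  | empty => simpa using Matrix.PosSemidef.zero
  | @insert a s' hj ih =>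
    rw [Finset.sum_insert hj]
    exact psd_add (h a (Finset.mem_insert_self _ _))
      (ih fun j hjs => h j (Finset.mem_insert_of_mem hjs))

/-- robustness inductive step. If `Q₁,…,Q_N` all belong to the global
feasible set at time `k−1` (built from the `Pold ℓ = Pₗ[k−1]`), and
`Pₗ[k−1]⁻¹ ⪯ θ̄ Pₗ[k]⁻¹` for all `ℓ` with `θ̄ ≥ 1`, then for any node `i`, any neighbor
set `𝒩ᵢ ∋ i` and coefficients `λ_P, λⱼ ∈ [0,1]` with `λ_P + Σ_{j∈𝒩ᵢ} λⱼ ≤ 1`, every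
`Q` with `0 ⪯ Q ⪯ λ_P Pᵢ[k]⁻¹ + (1/θ̄) Σ_{j∈𝒩ᵢ} λⱼ Qⱼ` belongs to the global feasible
set at time `k` (built from `Pnew ℓ = Pₗ[k]`). -/
theorem stmt6 {n N : ℕ} (Pold Pnew : Fin N → Matrix (Fin n) (Fin n) ℝ)
    (hPold : ∀ ℓ, (Pold ℓ).PosDef) (hPnew : ∀ ℓ, (Pnew ℓ).PosDef)
    (θ : ℝ) (hθ : 1 ≤ θ)
    (hdrift : ∀ ℓ, (θ • (Pnew ℓ)⁻¹ - (Pold ℓ)⁻¹).PosSemidef)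
    (Q : Fin N → Matrix (Fin n) (Fin n) ℝ)
    (hQ : ∀ j, (Q j).PosSemidef ∧
      ∃ β : Fin N → ℝ, (∀ ℓ, β ℓ ∈ Set.Icc (0 : ℝ) 1) ∧ (∑ ℓ, β ℓ) ≤ 1 ∧
        ((∑ ℓ, β ℓ • (Pold ℓ)⁻¹) - Q j).PosSemidef)
    (i : Fin N) (𝒩 : Finset (Fin N)) (hi : i ∈ 𝒩)
    (lP : ℝ) (l : Fin N → ℝ)
    (hlP : lP ∈ Set.Icc (0 : ℝ) 1) (hl : ∀ j ∈ 𝒩, l j ∈ Set.Icc (0 : ℝ) 1)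
    (hsum : lP + ∑ j ∈ 𝒩, l j ≤ 1)
    (Q' : Matrix (Fin n) (Fin n) ℝ) (hQ'psd : Q'.PosSemidef)
    (hQ'le : ((lP • (Pnew i)⁻¹ + θ⁻¹ • ∑ j ∈ 𝒩, l j • Q j) - Q').PosSemidef) :
    Q'.PosSemidef ∧
      ∃ μ : Fin N → ℝ, (∀ ℓ, μ ℓ ∈ Set.Icc (0 : ℝ) 1) ∧ (∑ ℓ, μ ℓ) ≤ 1 ∧
        ((∑ ℓ, μ ℓ • (Pnew ℓ)⁻¹) - Q').PosSemidef := by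
  classical
  choose hQpsd β hβ01 hβsum hβle using hQ
  have hθ0 : (θ : ℝ) ≠ 0 := by linarith
  have hθinv : (0 : ℝ) ≤ θ⁻¹ := inv_nonneg.2 (by linarith)
  have hlnn : ∀ j ∈ 𝒩, 0 ≤ l j := fun j hj => (hl j hj).1
  have hsl : 0 ≤ ∑ j ∈ 𝒩, l j := Finset.sum_nonneg hlnn
  set μ : Fin N → ℝ := fun ℓ => (if ℓ = i then lP else 0) + ∑ j ∈ 𝒩, l j * β j ℓ with hμ
  refine ⟨hQ'psd, μ, ?_, ?_, ?_⟩
  · intro ℓ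
    constructor
    · apply add_nonneg
      · split_ifs
        exacts [hlP.1, le_rfl]
      · exact Finset.sum_nonneg fun j hj => mul_nonneg (hlnn j hj) ((hβ01 j ℓ).1)
    · calc μ ℓ ≤ lP + ∑ j ∈ 𝒩, l j := by
            apply add_le_add
            · split_ifs
              exacts [le_rfl, hlP.1]
            · exact Finset.sum_le_sum fun j hj =>
                (mul_le_of_le_one_right (hlnn j hj) ((hβ01 j ℓ).2))
        _ ≤ 1 := hsum
  · have h1 : (∑ ℓ, if ℓ = i then lP else 0) = lP := by simp
    have h2 : ∀ j ∈ 𝒩, (∑ ℓ, l j * β j ℓ) ≤ l j := by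
      intro j hj
      rw [← Finset.mul_sum]
      exact mul_le_of_le_one_right (hlnn j hj) (hβsum j)
    calc (∑ ℓ, μ ℓ) = lP + ∑ ℓ, ∑ j ∈ 𝒩, l j * β j ℓ := by
          rw [hμ]; rw [Finset.sum_add_distrib, h1]
      _ = lP + ∑ j ∈ 𝒩, ∑ ℓ, l j * β j ℓ := by rw [Finset.sum_comm]
      _ ≤ lP + ∑ j ∈ 𝒩, l j := by
          exact add_le_add le_rfl (Finset.sum_le_sum h2)
      _ ≤ 1 := hsum
  · -- matrix part
    set D : Fin N → Matrix (Fin n) (Fin n) ℝ := fun j =>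
      (∑ ℓ, β j ℓ • (θ • (Pnew ℓ)⁻¹ - (Pold ℓ)⁻¹)) + ((∑ ℓ, β j ℓ • (Pold ℓ)⁻¹) - Q j)
      with hD
    have hDpsd : ∀ j, (D j).PosSemidef := fun j =>
      psd_add (psd_sum _ _ fun ℓ _ => psd_smul (hdrift ℓ) ((hβ01 j ℓ).1)) (hβle j)
    have hDj : ∀ j, (l j * θ⁻¹) • D j =
        (∑ ℓ, (l j * β j ℓ) • (Pnew ℓ)⁻¹) - (θ⁻¹ * l j) • Q j := by
      intro j
      rw [hD]
      rw [smul_add, smul_sub, Finset.smul_sum, Finset.smul_sum]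
      rw [add_sub_assoc', ← Finset.sum_add_distrib]
      congr 1
      · apply Finset.sum_congr rfl
        intro ℓ _
        rw [smul_smul, smul_sub, smul_smul, smul_smul, sub_add_cancel]
        congr 1
        field_simp
      · rw [mul_comm]
    have big : (∑ ℓ, μ ℓ • (Pnew ℓ)⁻¹) - Q' =
        (∑ j ∈ 𝒩, (l j * θ⁻¹) • D j) +
          ((lP • (Pnew i)⁻¹ + θ⁻¹ • ∑ j ∈ 𝒩, l j • Q j) - Q') := by
      have hL : (∑ ℓ, μ ℓ • (Pnew ℓ)⁻¹) =
          lP • (Pnew i)⁻¹ + ∑ j ∈ 𝒩, ∑ ℓ, (l j * β j ℓ) • (Pnew ℓ)⁻¹ := by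
        rw [hμ]
        simp only [add_smul, Finset.sum_add_distrib]
        congr 1
        · simp [ite_smul]
        · rw [Finset.sum_comm]
          apply Finset.sum_congr rfl
          intro ℓ _
          rw [Finset.sum_smul]
      have hR : (∑ j ∈ 𝒩, (l j * θ⁻¹) • D j) =
          (∑ j ∈ 𝒩, ∑ ℓ, (l j * β j ℓ) • (Pnew ℓ)⁻¹) - ∑ j ∈ 𝒩, (θ⁻¹ * l j) • Q j := by
        rw [← Finset.sum_sub_distrib]
        exact Finset.sum_congr rfl fun j _ => hDj j
      have hR2 : θ⁻¹ • (∑ j ∈ 𝒩, l j • Q j) = ∑ j ∈ 𝒩, (θ⁻¹ * l j) • Q j := by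
        rw [Finset.smul_sum]
        exact Finset.sum_congr rfl fun j _ => by rw [smul_smul]
      rw [hL, hR, hR2]
      abel
    rw [big]
    exact psd_add
      (psd_sum _ _ fun j hj => psd_smul (hDpsd j) (mul_nonneg (hlnn j hj) hθinv))
      hQ'le
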